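/- Let s = (s_1,…,s_n) be a sequence of positive integers with s_n = 1. For every nonnegative integer t, the number of lattice points λ ∈ ℤ^n satisfying 0 ≤ λ_1/s_1 ≤ ⋯ ≤ λ_n/s_n ≤ t equals Σ_{i=0}^{n} c_i · C(t+n−i, n), where c_i = #{ r ∈ Ψ_n : des_s(r) = i } and C(·,·) is the binomial coefficient. (Equivalently, the δ-vector of P_s satisfies δ_{P_s,i} = #{ r ∈ Ψ_n : des_s(r) = i }.) -/

import Mathlib

/-- The generator vectors of the s-lecture hall parallelepiped: `lhVec s j` has
`i`-th coordinate `s i` for `i ≥ j` and `0` for `i < j`. -/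
def lhVec {n : ℕ} (s : Fin n → ℕ) (j : Fin n) : Fin n → ℝ :=
  fun i => if j ≤ i then (s i : ℝ) else 0

/-- The s-lecture hall parallelepiped: the half-open parallelepiped generated by
the vectors `lhVec s j`. -/
def lhPar {n : ℕ} (s : Fin n → ℕ) : Set (Fin n → ℝ) :=
  {x | ∃ c : Fin n → ℝ, (∀ j, 0 ≤ c j ∧ c j < 1) ∧ x = ∑ j, c j • lhVec s j}

/-- `lhEll S i` is the number of lattice points of `S ⊆ ℝ^N` whose last coordinate
equals `i`. -/
noncomputable def lhEll {N : ℕ} (S : Set (Fin N → ℝ)) (i : ℕ) : ℕ :=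
  Set.ncard {x : Fin N → ℤ | (fun k => (x k : ℝ)) ∈ S ∧
    ∀ j : Fin N, (j : ℕ) = N - 1 → x j = (i : ℤ)}

/-- The number of s-descents of `r`: indices `i` with `r i / s i > r (i+1) / s (i+1)`. -/
noncomputable def sDes {N : ℕ} (s : Fin N → ℕ) (r : Fin N → ℤ) : ℕ :=
  Set.ncard {i : Fin N | ∃ h : (i : ℕ) + 1 < N,
    (r i : ℚ) / (s i : ℚ) > (r ⟨(i : ℕ) + 1, h⟩ : ℚ) / (s ⟨(i : ℕ) + 1, h⟩ : ℚ)}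

/-- The number of s-ascents of `r`: indices `i` with `r i / s i < r (i+1) / s (i+1)`. -/
noncomputable def sAsc {N : ℕ} (s : Fin N → ℕ) (r : Fin N → ℤ) : ℕ :=
  Set.ncard {i : Fin N | ∃ h : (i : ℕ) + 1 < N,
    (r i : ℚ) / (s i : ℚ) < (r ⟨(i : ℕ) + 1, h⟩ : ℚ) / (s ⟨(i : ℕ) + 1, h⟩ : ℚ)}

/-- The number of (regular) descents of `r`: indices `i` with `r i > r (i+1)`. -/
noncomputable def rDes {N : ℕ} (r : Fin N → ℤ) : ℕ :=
  Set.ncard {i : Fin N | ∃ h : (i : ℕ) + 1 < N, r ⟨(i : ℕ) + 1, h⟩ < r i}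

/-- The number of (regular) ascents of `r`: indices `i` with `r i < r (i+1)`. -/
noncomputable def rAsc {N : ℕ} (r : Fin N → ℤ) : ℕ :=
  Set.ncard {i : Fin N | ∃ h : (i : ℕ) + 1 < N, r i < r ⟨(i : ℕ) + 1, h⟩}

/-- The number of s-descents of `r` at positions strictly before position `i`. -/
noncomputable def sDesLt {N : ℕ} (s : Fin N → ℕ) (r : Fin N → ℤ) (i : Fin N) : ℕ :=
  Set.ncard {j : Fin N | (j : ℕ) < (i : ℕ) ∧ ∃ h : (j : ℕ) + 1 < N,
    (r j : ℚ) / (s j : ℚ) > (r ⟨(j : ℕ) + 1, h⟩ : ℚ) / (s ⟨(j : ℕ) + 1, h⟩ : ℚ)}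

/-- `lhPsi s` is the set `Ψ_n = {0,…,s 0 − 1} × ⋯ × {0,…,s (n-1) − 1}`. -/
def lhPsi {n : ℕ} (s : Fin n → ℕ) : Set (Fin n → ℤ) :=
  {r | ∀ i, 0 ≤ r i ∧ r i < (s i : ℤ)}

/-- `inDilate s t lam` says that the lattice point `lam` satisfies
`0 ≤ lam 0 / s 0 ≤ lam 1 / s 1 ≤ ⋯ ≤ lam (n-1) / s (n-1) ≤ t`,
i.e. lies in the `t`-th dilate of the s-lecture hall polytope. -/
def inDilate {n : ℕ} (s : Fin n → ℕ) (t : ℕ) (lam : Fin n → ℤ) : Prop :=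
  (∀ i : Fin n, (i : ℕ) = 0 → 0 ≤ (lam i : ℚ) / (s i : ℚ)) ∧
  (∀ i : Fin n, ∀ h : (i : ℕ) + 1 < n,
    (lam i : ℚ) / (s i : ℚ) ≤ (lam ⟨(i : ℕ) + 1, h⟩ : ℚ) / (s ⟨(i : ℕ) + 1, h⟩ : ℚ)) ∧
  (∀ i : Fin n, (i : ℕ) = n - 1 → (lam i : ℚ) / (s i : ℚ) ≤ (t : ℚ))

namespace Stmt10aux
open Finset

variable {n : ℕ}

/-- sum of `δ` over indices `< v`. -/
def Dlt (δ : Fin n → ℕ) (v : ℕ) : ℤ :=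
  ∑ i ∈ univ.filter (fun i : Fin n => (i:ℕ) < v), (δ i : ℤ)

/-- sum of `k` over indices `≤ v`. -/
def Ksum (k : Fin n → ℕ) (v : ℕ) : ℤ :=
  ∑ i ∈ univ.filter (fun i : Fin n => (i:ℕ) ≤ v), (k i : ℤ)

def lhF (δ : Fin n → ℕ) (k : Fin n → ℕ) : Fin n → ℤ := fun j => Dlt δ j + Ksum k j

lemma Dlt_zero (δ : Fin n → ℕ) : Dlt δ 0 = 0 := by
  unfold Dlt
  rw [Finset.filter_false_of_mem (by intro i _; omega)]
  simp

lemma Dlt_succ (δ : Fin n → ℕ) {v : ℕ} (h : v < n) :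
    Dlt δ (v+1) = Dlt δ v + δ ⟨v, h⟩ := by
  unfold Dlt
  have : univ.filter (fun i : Fin n => (i:ℕ) < v + 1)
      = insert ⟨v, h⟩ (univ.filter (fun i : Fin n => (i:ℕ) < v)) := by
    ext i; simp [Fin.ext_iff]; omega
  rw [this, Finset.sum_insert (by simp)]
  ring

lemma Ksum_zero (hn : 0 < n) (k : Fin n → ℕ) : Ksum k 0 = k ⟨0, hn⟩ := by
  unfold Ksum
  have : univ.filter (fun i : Fin n => (i:ℕ) ≤ 0) = {⟨0, hn⟩} := by
    ext i; simp [Fin.ext_iff]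
  rw [this, Finset.sum_singleton]

lemma Ksum_succ (k : Fin n → ℕ) {v : ℕ} (h : v + 1 < n) :
    Ksum k (v+1) = Ksum k v + k ⟨v+1, h⟩ := by
  unfold Ksum
  have : univ.filter (fun i : Fin n => (i:ℕ) ≤ v + 1)
      = insert ⟨v+1, h⟩ (univ.filter (fun i : Fin n => (i:ℕ) ≤ v)) := by
    ext i; simp [Fin.ext_iff]; omega
  rw [this, Finset.sum_insert (by simp)]
  ring

lemma Ksum_top (hn : 0 < n) (k : Fin n → ℕ) : Ksum k (n-1) = ∑ j, (k j : ℤ) := by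
  unfold Ksum
  rw [Finset.filter_true_of_mem (by intro i _; omega)]

lemma Dlt_top (hn : 0 < n) (δ : Fin n → ℕ) (hδ : ∀ j : Fin n, ¬((j:ℕ)+1 < n) → δ j = 0) :
    Dlt δ (n-1) = ∑ j, (δ j : ℤ) := by
  unfold Dlt
  refine Finset.sum_subset (Finset.filter_subset _ _) ?_
  intro i _ hi
  simp only [Finset.mem_filter, Finset.mem_univ, true_and, not_lt] at hi
  have : ¬ ((i:ℕ)+1 < n) := by omega
  simp [hδ i this]

/-- the chain set -/
def chainSet (hn : 0 < n) (t : ℕ) (δ : Fin n → ℕ) : Set (Fin n → ℤ) :=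
  {m | 0 ≤ m ⟨0, hn⟩ ∧ (∀ j : Fin n, ∀ h : (j:ℕ)+1 < n, m j + (δ j : ℤ) ≤ m ⟨(j:ℕ)+1, h⟩) ∧
    m ⟨n-1, Nat.sub_lt hn Nat.one_pos⟩ ≤ (t : ℤ)}

def kSet (t : ℕ) (δ : Fin n → ℕ) : Set (Fin n → ℕ) :=
  {k | (∑ j, δ j) + (∑ j, k j) ≤ t}

lemma lhF_bijOn (hn : 0 < n) (t : ℕ) (δ : Fin n → ℕ)
    (hδ : ∀ j : Fin n, ¬((j:ℕ)+1 < n) → δ j = 0) :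
    Set.BijOn (lhF δ) (kSet t δ) (chainSet hn t δ) := by
  have hstep : ∀ (k : Fin n → ℕ) (v : ℕ) (h : v + 1 < n),
      lhF δ k ⟨v+1, h⟩ = lhF δ k ⟨v, by omega⟩ + δ ⟨v, by omega⟩ + k ⟨v+1, h⟩ := by
    intro k v h
    show Dlt δ (v+1) + Ksum k (v+1) = _
    rw [Dlt_succ δ (by omega : v < n), Ksum_succ k h]
    show _ = Dlt δ v + Ksum k v + _ + _
    ring
  have hzero : ∀ (k : Fin n → ℕ), lhF δ k ⟨0, hn⟩ = k ⟨0, hn⟩ := by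
    intro k
    show Dlt δ 0 + Ksum k 0 = _
    rw [Dlt_zero, Ksum_zero hn]; ring
  have htop : ∀ (k : Fin n → ℕ),
      lhF δ k ⟨n-1, by omega⟩ = (∑ j, (δ j : ℤ)) + (∑ j, (k j : ℤ)) := by
    intro k
    show Dlt δ (n-1) + Ksum k (n-1) = _
    rw [Dlt_top hn δ hδ, Ksum_top hn]
  refine ⟨?_, ?_, ?_⟩
  · -- maps to
    intro k hk
    refine ⟨by rw [hzero]; positivity, ?_, ?_⟩
    · intro j h
      have := hstep k j h
      have hj : (⟨(j:ℕ), by omega⟩ : Fin n) = j := rfl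
      rw [hj] at this
      rw [this]
      have : (0:ℤ) ≤ k ⟨(j:ℕ)+1, h⟩ := by positivity
      omega
    · rw [htop]
      have hk' : (∑ j, δ j) + (∑ j, k j) ≤ t := hk
      have : (((∑ j, δ j) + (∑ j, k j) : ℕ) : ℤ) ≤ (t:ℤ) := by exact_mod_cast hk'
      push_cast at this
      omega
  · -- injective
    intro k hk k' hk' he
    funext j
    rcases j with ⟨v, hv⟩
    match v with
    | 0 =>
      have := congrFun he (⟨0, hn⟩ : Fin n)
      rw [hzero, hzero] at this
      exact_mod_cast this
    | v+1 =>
      have h1 := congrFun he (⟨v+1, hv⟩ : Fin n)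
      have h2 := congrFun he (⟨v, by omega⟩ : Fin n)
      rw [hstep k v hv, hstep k' v hv, h2] at h1
      have : ((k ⟨v+1, hv⟩ : ℤ)) = (k' ⟨v+1, hv⟩ : ℤ) := by omega
      exact_mod_cast this
  · -- surjective
    intro m hm
    obtain ⟨hm0, hmstep, hmtop⟩ := hm
    set k : Fin n → ℕ := fun j =>
      if h0 : (j:ℕ) = 0 then (m j).toNat
      else ((m j) - m ⟨(j:ℕ)-1, by omega⟩ - δ ⟨(j:ℕ)-1, by omega⟩).toNat with hkdef
    have key : ∀ v : ℕ, ∀ hv : v < n, lhF δ k ⟨v, hv⟩ = m ⟨v, hv⟩ := by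
      intro v
      induction v with
      | zero =>
        intro hv
        rw [hzero]
        simp only [hkdef]
        simp [Int.toNat_of_nonneg hm0]
      | succ v ih =>
        intro hv
        rw [hstep k v hv, ih (by omega)]
        have hs : m ⟨v, by omega⟩ + (δ ⟨v, by omega⟩ : ℤ) ≤ m ⟨v+1, hv⟩ :=
          hmstep ⟨v, by omega⟩ hv
        have hk1 : k ⟨v+1, hv⟩ = ((m ⟨v+1, hv⟩) - m ⟨v, by omega⟩ - δ ⟨v, by omega⟩).toNat := by
          simp only [hkdef]
          rw [dif_neg (by simp)]
          norm_num
        rw [hk1, Int.toNat_of_nonneg (by omega)]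
        ring
    refine ⟨k, ?_, ?_⟩
    · -- k ∈ kSet
      show (∑ j, δ j) + (∑ j, k j) ≤ t
      have := htop k
      have hfk : lhF δ k ⟨n-1, by omega⟩ = m ⟨n-1, by omega⟩ := key (n-1) (by omega)
      rw [hfk] at this
      have h2 : ((∑ j, δ j : ℕ) : ℤ) + ((∑ j, k j : ℕ) : ℤ) ≤ (t:ℤ) := by push_cast; omega
      exact_mod_cast h2
    · funext j
      rcases j with ⟨v, hv⟩
      exact key v hv

lemma kset_finite (t : ℕ) (P : (Fin n → ℕ) → Prop)
    (hP : ∀ k, P k → ∀ j, k j ≤ t) : {k : Fin n → ℕ | P k}.Finite := by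
  have : {k : Fin n → ℕ | P k} ⊆ Set.pi Set.univ (fun _ : Fin n => Set.Iic t) := by
    intro k hk j _
    exact hP k hk j
  exact Set.Finite.subset (Set.Finite.pi (fun _ => Set.finite_Iic t)) this

lemma base_count (M : ℕ) : {k : Fin n → ℕ | (∑ j, k j) ≤ M}.ncard = (M + n).choose n := by
  rw [← Nat.card_coe_set_eq]
  have e1 : {k : Fin n → ℕ | (∑ j, k j) ≤ M} ≃ {P : Fin (n+1) → ℕ // (∑ i, P i) = M} := by
    refine ⟨fun k => ⟨Fin.cons (M - ∑ j, (k : Fin n → ℕ) j) (k : Fin n → ℕ), ?_⟩,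
      fun P => ⟨fun i => (P : Fin (n+1) → ℕ) i.succ, ?_⟩, ?_, ?_⟩
    · rcases k with ⟨k, hk⟩
      rw [Fin.sum_cons]
      simp only [Set.mem_setOf_eq] at hk
      show M - (∑ j, k j) + (∑ j, k j) = M
      omega
    · rcases P with ⟨P, hP⟩
      simp only [Set.mem_setOf_eq]
      rw [Fin.sum_univ_succ] at hP
      omega
    · intro k
      ext j
      simp
    · intro P
      rcases P with ⟨P, hP⟩
      ext i
      refine Fin.cases ?_ ?_ i
      · rw [Fin.sum_univ_succ] at hP
        simp only [Fin.cons_zero]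
        omega
      · intro j
        simp
  rw [Nat.card_congr e1, Nat.card_congr (Sym.equivNatSumOfFintype (Fin (n+1)) M).symm,
    Nat.card_eq_fintype_card, Sym.card_sym_eq_choose]
  rw [Fintype.card_fin]
  have h1 : n + 1 + M - 1 = M + n := by omega
  rw [h1]
  rw [← Nat.choose_symm (by omega : M ≤ M + n)]
  congr 1
  omega

lemma kset_count (hn : 0 < n) (t : ℕ) (δ : Fin n → ℕ) :
    (kSet t δ).ncard = (t + n - ∑ j, δ j).choose n := by
  by_cases hd : (∑ j, δ j) ≤ t
  · have hset : kSet t δ = {k : Fin n → ℕ | (∑ j, k j) ≤ t - ∑ j, δ j} := by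
      ext k; simp only [kSet, Set.mem_setOf_eq]; omega
    rw [hset, base_count]
    congr 1
    omega
  · have hset : kSet t δ = ∅ := by
      ext k; simp only [kSet, Set.mem_setOf_eq, Set.mem_empty_iff_false, iff_false]
      omega
    rw [hset, Set.ncard_empty]
    rw [Nat.choose_eq_zero_of_lt (by omega)]

/-- integer part comparison with fractional parts in `[0,1)`. -/
lemma frac_le {x y : ℚ} (hx0 : 0 ≤ x) (hx1 : x < 1) (hy0 : 0 ≤ y) (hy1 : y < 1) (a b : ℤ) :
    (a:ℚ) + x ≤ (b:ℚ) + y ↔ a + (if y < x then 1 else 0) ≤ b := by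
  split_ifs with h
  · constructor
    · intro hle
      have h1 : (a:ℚ) < (b:ℚ) := by linarith
      have h2 : a < b := by exact_mod_cast h1
      omega
    · intro hab
      have h1 : ((a+1 : ℤ):ℚ) ≤ (b:ℚ) := by exact_mod_cast hab
      push_cast at h1
      linarith
  · push_neg at h
    constructor
    · intro hle
      have h1 : (a:ℚ) < (b:ℚ) + 1 := by linarith
      have h2 : a < b + 1 := by exact_mod_cast h1
      omega
    · intro hab
      have h1 : (a:ℚ) ≤ (b:ℚ) := by exact_mod_cast (by omega : a ≤ b)
      linarith

end Stmt10aux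

open Classical in
/-- indicator of an s-descent of `r` at position `j`. -/
noncomputable def lhDelta {n : ℕ} (s : Fin n → ℕ) (r : Fin n → ℤ) (j : Fin n) : ℕ :=
  if (∃ h : (j:ℕ)+1 < n,
    (r j : ℚ)/(s j : ℚ) > (r ⟨(j:ℕ)+1, h⟩ : ℚ)/(s ⟨(j:ℕ)+1, h⟩ : ℚ)) then 1 else 0

lemma lhDelta_last {n : ℕ} (s : Fin n → ℕ) (r : Fin n → ℤ) (j : Fin n)
    (h : ¬((j:ℕ)+1 < n)) : lhDelta s r j = 0 := by
  unfold lhDelta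
  rw [if_neg]
  rintro ⟨h', -⟩
  exact h h'

lemma sum_lhDelta {n : ℕ} (s : Fin n → ℕ) (r : Fin n → ℤ) :
    ∑ j, lhDelta s r j = sDes s r := by
  classical
  unfold sDes
  rw [show {i : Fin n | ∃ h : (i : ℕ) + 1 < n,
      (r i : ℚ) / (s i : ℚ) > (r ⟨(i : ℕ) + 1, h⟩ : ℚ) / (s ⟨(i : ℕ) + 1, h⟩ : ℚ)}
    = ↑(Finset.univ.filter (fun i : Fin n => ∃ h : (i : ℕ) + 1 < n,
      (r i : ℚ) / (s i : ℚ) > (r ⟨(i : ℕ) + 1, h⟩ : ℚ) / (s ⟨(i : ℕ) + 1, h⟩ : ℚ))) by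
    ext i; simp]
  rw [Set.ncard_coe_finset, Finset.card_filter]
  apply Finset.sum_congr rfl
  intro j _
  by_cases hc : ∃ h : (j : ℕ) + 1 < n,
      (r j : ℚ) / (s j : ℚ) > (r ⟨(j : ℕ) + 1, h⟩ : ℚ) / (s ⟨(j : ℕ) + 1, h⟩ : ℚ)
  · simp [lhDelta, hc]
  · simp [lhDelta, hc]

set_option maxHeartbeats 2000000 in
lemma trans_iff {n : ℕ} (hn : 0 < n) (s : Fin n → ℕ) (hs : ∀ i, 0 < s i)
    (hlast : s ⟨n - 1, Nat.sub_lt hn Nat.one_pos⟩ = 1) (t : ℕ) (r : Fin n → ℤ) (hr : r ∈ lhPsi s)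
    (m : Fin n → ℤ) :
    inDilate s t (fun i => r i + (s i : ℤ) * m i) ↔
      m ∈ Stmt10aux.chainSet hn t (lhDelta s r) := by
  have hsQ : ∀ i, (0:ℚ) < (s i : ℚ) := fun i => by exact_mod_cast hs i
  have hq : ∀ i : Fin n, ((r i + (s i : ℤ) * m i : ℤ) : ℚ) / (s i : ℚ)
      = (m i : ℚ) + (r i : ℚ) / (s i : ℚ) := by
    intro i
    have h0 : (s i : ℚ) ≠ 0 := (hsQ i).ne'
    push_cast
    field_simp
    ring
  have hx0 : ∀ i, 0 ≤ (r i : ℚ) / (s i : ℚ) := fun i =>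
    div_nonneg (by exact_mod_cast (hr i).1) (le_of_lt (hsQ i))
  have hx1 : ∀ i, (r i : ℚ) / (s i : ℚ) < 1 := fun i =>
    (div_lt_one (hsQ i)).2 (by exact_mod_cast (hr i).2)
  have key1 : (0 ≤ ((r ⟨0,hn⟩ + (s ⟨0,hn⟩ : ℤ) * m ⟨0,hn⟩ : ℤ) : ℚ) / (s ⟨0,hn⟩ : ℚ)) ↔
      0 ≤ m ⟨0,hn⟩ := by
    rw [hq]
    have := Stmt10aux.frac_le (le_refl (0:ℚ)) one_pos (hx0 ⟨0,hn⟩) (hx1 ⟨0,hn⟩)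
      0 (m ⟨0,hn⟩)
    simpa [(hx0 ⟨0,hn⟩).not_gt] using this
  have key2 : ∀ (j : Fin n) (h : (j:ℕ)+1 < n),
      (((r j + (s j : ℤ) * m j : ℤ) : ℚ) / (s j : ℚ) ≤
        ((r ⟨(j:ℕ)+1,h⟩ + (s ⟨(j:ℕ)+1,h⟩ : ℤ) * m ⟨(j:ℕ)+1,h⟩ : ℤ) : ℚ) / (s ⟨(j:ℕ)+1,h⟩ : ℚ))
      ↔ (m j + (lhDelta s r j : ℤ) ≤ m ⟨(j:ℕ)+1,h⟩) := by
    intro j h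
    rw [hq, hq]
    rw [Stmt10aux.frac_le (hx0 j) (hx1 j) (hx0 ⟨(j:ℕ)+1,h⟩) (hx1 ⟨(j:ℕ)+1,h⟩)]
    have hδ : (lhDelta s r j : ℤ)
        = if ((r ⟨(j:ℕ)+1,h⟩:ℚ)/(s ⟨(j:ℕ)+1,h⟩:ℚ) < (r j:ℚ)/(s j:ℚ)) then 1 else 0 := by
      unfold lhDelta
      by_cases hc : (r ⟨(j:ℕ)+1,h⟩:ℚ)/(s ⟨(j:ℕ)+1,h⟩:ℚ) < (r j:ℚ)/(s j:ℚ)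
      · rw [if_pos ⟨h, hc⟩, if_pos hc]
        simp
      · rw [if_neg ?_, if_neg hc]
        · simp
        · rintro ⟨h', hgt⟩
          exact hc hgt
    rw [hδ]
  have hrlast : r ⟨n-1, by omega⟩ = 0 := by
    have h1 := (hr ⟨n-1, by omega⟩).1
    have h2 := (hr ⟨n-1, by omega⟩).2
    rw [hlast] at h2
    omega
  have key3 : (((r ⟨n-1, by omega⟩ + (s ⟨n-1, by omega⟩ : ℤ) * m ⟨n-1, by omega⟩ : ℤ) : ℚ)
      / (s ⟨n-1, by omega⟩ : ℚ) ≤ (t:ℚ)) ↔ m ⟨n-1, by omega⟩ ≤ (t:ℤ) := by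
    rw [hq, hrlast]
    norm_num
    constructor
    · intro h'; exact_mod_cast h'
    · intro h'; exact_mod_cast h'
  constructor
  · rintro ⟨c1, c2, c3⟩
    exact ⟨key1.1 (c1 ⟨0,hn⟩ rfl), fun j h => (key2 j h).1 (c2 j h),
      key3.1 (c3 ⟨n-1, by omega⟩ rfl)⟩
  · rintro ⟨c1, c2, c3⟩
    refine ⟨?_, fun j h => (key2 j h).2 (c2 j h), ?_⟩
    · intro i hi
      have h2 : i = ⟨0, hn⟩ := Fin.ext hi
      rw [h2]
      exact key1.2 c1
    · intro i hi
      have h2 : i = ⟨n-1, by omega⟩ := Fin.ext hi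
      rw [h2]
      exact key3.2 c3

/-- if `s_n = 1`, the number of lattice points in the `t`-th dilate
of `P_s` equals `∑_{i=0}^n c_i · C(t+n-i,n)` with `c_i = #{r ∈ Ψ_n : des_s(r) = i}`. -/
theorem stmt_10 (n : ℕ) (hn : 0 < n) (s : Fin n → ℕ) (hs : ∀ i, 0 < s i)
    (hlast : s ⟨n - 1, by omega⟩ = 1) (t : ℕ) :
    Set.ncard {lam : Fin n → ℤ | inDilate s t lam} =
      ∑ i ∈ Finset.range (n + 1),
        Set.ncard {r ∈ lhPsi s | sDes s r = i} * Nat.choose (t + n - i) n := by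
  classical
  have hsZ : ∀ i, (0:ℤ) < (s i : ℤ) := fun i => by exact_mod_cast hs i
  have hPsiFin : (lhPsi s).Finite := by
    apply Set.Finite.subset (Set.Finite.pi (fun i : Fin n => Set.finite_Icc (0:ℤ) ((s i : ℤ))))
    intro r hr i _
    exact Set.mem_Icc.2 ⟨(hr i).1, le_of_lt (hr i).2⟩
  have main_r : ∀ r ∈ lhPsi s,
      {lam : Fin n → ℤ | inDilate s t lam ∧ (fun i => lam i % (s i : ℤ)) = r}.ncard
        = (t + n - sDes s r).choose n ∧
      {lam : Fin n → ℤ | inDilate s t lam ∧ (fun i => lam i % (s i : ℤ)) = r}.Finite := by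
    intro r hr
    have hδ0 : ∀ j : Fin n, ¬((j:ℕ)+1 < n) → lhDelta s r j = 0 :=
      fun j h => lhDelta_last s r j h
    have hbij1 := Stmt10aux.lhF_bijOn hn t (lhDelta s r) hδ0
    have hkfin : (Stmt10aux.kSet t (lhDelta s r)).Finite := by
      apply Stmt10aux.kset_finite t
      intro k hk j
      have h1 : k j ≤ ∑ j', k j' :=
        Finset.single_le_sum (fun _ _ => Nat.zero_le _) (Finset.mem_univ j)
      have h2 : (∑ j', lhDelta s r j') + (∑ j', k j') ≤ t := hk
      omega
    have hchfin : (Stmt10aux.chainSet hn t (lhDelta s r)).Finite := by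
      rw [← hbij1.image_eq]
      exact hkfin.image _
    have hbij2 : Set.BijOn (fun m : Fin n → ℤ => fun i => r i + (s i : ℤ) * m i)
        (Stmt10aux.chainSet hn t (lhDelta s r))
        {lam : Fin n → ℤ | inDilate s t lam ∧ (fun i => lam i % (s i : ℤ)) = r} := by
      refine ⟨?_, ?_, ?_⟩
      · intro m hm
        refine ⟨(trans_iff hn s hs hlast t r hr m).2 hm, ?_⟩
        funext i
        show (r i + (s i : ℤ) * m i) % (s i : ℤ) = r i
        rw [Int.add_mul_emod_self_left]
        exact Int.emod_eq_of_lt (hr i).1 (hr i).2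
      · intro m _ m' _ he
        funext i
        have h1 : r i + (s i : ℤ) * m i = r i + (s i : ℤ) * m' i := congrFun he i
        have h2 : (s i : ℤ) * m i = (s i : ℤ) * m' i := by omega
        exact mul_left_cancel₀ (hsZ i).ne' h2
      · intro lam hlam
        have hre : (fun i => r i + (s i : ℤ) * (lam i / (s i : ℤ))) = lam := by
          funext i
          have h1 : lam i % (s i : ℤ) = r i := congrFun hlam.2 i
          rw [← h1]
          exact Int.emod_add_mul_ediv (lam i) ((s i : ℤ))
        refine ⟨fun i => lam i / (s i : ℤ), ?_, hre⟩
        apply (trans_iff hn s hs hlast t r hr (fun i => lam i / (s i : ℤ))).1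
        rw [hre]
        exact hlam.1
    constructor
    · rw [← hbij2.image_eq, Set.ncard_image_of_injOn hbij2.injOn,
        ← hbij1.image_eq, Set.ncard_image_of_injOn hbij1.injOn,
        Stmt10aux.kset_count hn t (lhDelta s r), sum_lhDelta s r]
    · rw [← hbij2.image_eq]
      exact hchfin.image _
  have hrmem : ∀ lam : Fin n → ℤ, (fun i => lam i % (s i : ℤ)) ∈ lhPsi s := by
    intro lam i
    exact ⟨Int.emod_nonneg _ (hsZ i).ne', Int.emod_lt_of_pos _ (hsZ i)⟩
  have hAfin : {lam : Fin n → ℤ | inDilate s t lam}.Finite := by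
    apply Set.Finite.subset (Set.Finite.biUnion hPsiFin.toFinset.finite_toSet
      (fun r hrr => (main_r r (hPsiFin.mem_toFinset.1 hrr)).2))
    intro lam hl
    exact Set.mem_biUnion (hPsiFin.mem_toFinset.2 (hrmem lam)) ⟨hl, rfl⟩
  rw [Set.ncard_eq_toFinset_card _ hAfin]
  rw [Finset.card_eq_sum_card_fiberwise
    (f := fun lam : Fin n → ℤ => fun i => lam i % (s i : ℤ)) (t := hPsiFin.toFinset)
    (fun lam hl => hPsiFin.mem_toFinset.2 (hrmem lam))]
  have hfib : ∀ r ∈ hPsiFin.toFinset,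
      (hAfin.toFinset.filter (fun lam => (fun i => lam i % (s i : ℤ)) = r)).card
        = (t + n - sDes s r).choose n := by
    intro r hrr
    rw [← Set.ncard_coe_finset]
    rw [show (↑(hAfin.toFinset.filter (fun lam => (fun i => lam i % (s i : ℤ)) = r))
        : Set (Fin n → ℤ))
        = {lam : Fin n → ℤ | inDilate s t lam ∧ (fun i => lam i % (s i : ℤ)) = r} by
      ext lam
      simp [Set.Finite.mem_toFinset]]
    exact (main_r r (hPsiFin.mem_toFinset.1 hrr)).1
  rw [Finset.sum_congr rfl hfib]
  have hbound : ∀ r : Fin n → ℤ, sDes s r ≤ n := by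
    intro r
    unfold sDes
    calc Set.ncard _ ≤ Set.ncard (Set.univ : Set (Fin n)) :=
          Set.ncard_le_ncard (Set.subset_univ _) Set.finite_univ
      _ = n := by rw [Set.ncard_univ]; simp
  rw [← Finset.sum_fiberwise_of_maps_to (g := fun r => sDes s r) (t := Finset.range (n+1))
    (fun r _ => Finset.mem_range.2 (Nat.lt_succ_of_le (hbound r)))]
  refine Finset.sum_congr rfl fun i _ => ?_
  have hconst : ∀ r ∈ hPsiFin.toFinset.filter (fun r => sDes s r = i),
      (t + n - sDes s r).choose n = (t + n - i).choose n := by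
    intro r hrr
    rw [(Finset.mem_filter.1 hrr).2]
  rw [Finset.sum_congr rfl hconst, Finset.sum_const, smul_eq_mul]
  congr 1
  rw [← Set.ncard_coe_finset]
  congr 1
  ext r
  simp [Set.Finite.mem_toFinset]
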